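/- For a rooted directed graph (Γ, v) the following are equivalent: (1) for each vertex w there is a unique simple directed path from v to w; (2) (Γ, v) admits a unique directed spanning tree; (3) (Γ, v) admits a directed spanning tree T such that for each edge e not in T, the geodesic in T from v to the terminal vertex of e is an initial segment of the geodesic from v to the initial vertex of e. -/

import Mathlib

structure DGraph : Type 1 where
  V : Type
  E : Type
  ι : E → V
  τ : E → V

namespace DGraph

/-- A directed path from `u` to `w` given by its list of edges. -/
inductive Path (G : DGraph) : G.V → G.V → List G.E → Prop
  | nil (v : G.V) : Path G v v []
  | cons (e : G.E) {w : G.V} {p : List G.E} :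
      Path G (G.τ e) w p → Path G (G.ι e) w (e :: p)

/-- The list of vertices visited by a path `p` starting at `u`. -/
def verts (G : DGraph) (u : G.V) (p : List G.E) : List G.V :=
  u :: p.map G.τ

/-- A simple directed path: a path visiting no vertex twice. -/
def SimplePath (G : DGraph) (u w : G.V) (p : List G.E) : Prop :=
  G.Path u w p ∧ (G.verts u p).Nodup

/-- `w` is reachable from `u` by a directed path. -/
def Reach (G : DGraph) (u w : G.V) : Prop := ∃ p, G.Path u w p

/-- A graph is rooted at `v` if every vertex is reachable from `v`. -/
def Rooted (G : DGraph) (v : G.V) : Prop := ∀ w, G.Reach v w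

end DGraph


namespace DGraph

/-- A directed path from `u` to `w` all of whose edges lie in `ES`. -/
def PathIn (G : DGraph) (ES : Set G.E) (u w : G.V) (p : List G.E) : Prop :=
  G.Path u w p ∧ ∀ e ∈ p, e ∈ ES

/-- A directed rooted subtree of `G` rooted at `v`, given by a vertex set `VS`
and an edge set `ES`: it is a subgraph containing `v` in which every vertex is
reached from `v` by a unique directed path. -/
def IsRootedSubtree (G : DGraph) (v : G.V) (VS : Set G.V) (ES : Set G.E) : Prop :=
  v ∈ VS ∧ (∀ e ∈ ES, G.ι e ∈ VS ∧ G.τ e ∈ VS) ∧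
    ∀ w ∈ VS, ∃! p : List G.E, G.PathIn ES v w p

/-- A directed spanning tree of `G` rooted at `v`. -/
def IsSpanningTree (G : DGraph) (v : G.V) (ES : Set G.E) : Prop :=
  G.IsRootedSubtree v Set.univ ES


section Aux

variable {G : DGraph}

lemma path_nil_iff {u w : G.V} : G.Path u w [] ↔ u = w := by
  constructor
  · intro h; cases h; rfl
  · rintro rfl; exact .nil u

lemma path_cons_iff {u w : G.V} {e : G.E} {p : List G.E} :
    G.Path u w (e :: p) ↔ u = G.ι e ∧ G.Path (G.τ e) w p := by
  constructor
  · intro h; cases h; exact ⟨rfl, by assumption⟩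
  · rintro ⟨rfl, h⟩; exact .cons e h

lemma path_append_iff {u w : G.V} {p q : List G.E} :
    G.Path u w (p ++ q) ↔ ∃ m, G.Path u m p ∧ G.Path m w q := by
  induction p generalizing u with
  | nil =>
    simp only [List.nil_append]
    constructor
    · intro h; exact ⟨u, .nil u, h⟩
    · rintro ⟨m, hm, h⟩; rw [path_nil_iff] at hm; rwa [hm]
  | cons e p ih =>
    simp only [List.cons_append, path_cons_iff, ih]
    constructor
    · rintro ⟨h1, m, h2, h3⟩; exact ⟨m, ⟨h1, h2⟩, h3⟩
    · rintro ⟨m, ⟨h1, h2⟩, h3⟩; exact ⟨h1, m, h2, h3⟩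

lemma path_concat_iff {u w : G.V} {e : G.E} {p : List G.E} :
    G.Path u w (p ++ [e]) ↔ G.Path u (G.ι e) p ∧ w = G.τ e := by
  rw [path_append_iff]
  constructor
  · rintro ⟨m, h1, h2⟩
    rw [path_cons_iff] at h2
    obtain ⟨rfl, h3⟩ := h2
    rw [path_nil_iff] at h3
    exact ⟨h1, h3.symm⟩
  · rintro ⟨h1, rfl⟩
    exact ⟨G.ι e, h1, .cons e (.nil _)⟩

lemma verts_cons {u : G.V} {e : G.E} {p : List G.E} :
    G.verts u (e :: p) = u :: G.verts (G.τ e) p := rfl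

lemma verts_append {u : G.V} {p q : List G.E} :
    G.verts u (p ++ q) = G.verts u p ++ q.map G.τ := by
  simp [verts]

lemma start_mem_verts {u : G.V} {p : List G.E} : u ∈ G.verts u p := by
  simp [verts]

lemma end_mem_verts {u w : G.V} {p : List G.E} (h : G.Path u w p) :
    w ∈ G.verts u p := by
  induction h with
  | nil v => simp [verts]
  | cons e h ih => rw [verts_cons]; exact List.mem_cons_of_mem _ ih

lemma verts_concat {u w : G.V} {p : List G.E} (h : G.Path u w p) :
    ∃ l, G.verts u p = l ++ [w] := by
  induction h with
  | nil v => exact ⟨[], rfl⟩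
  | cons e h ih =>
    obtain ⟨l, hl⟩ := ih
    exact ⟨G.ι e :: l, by rw [verts_cons, hl]; rfl⟩

lemma mem_verts_split {u w x : G.V} {p : List G.E} (h : G.Path u w p)
    (hx : x ∈ G.verts u p) :
    ∃ p₁ p₂, p = p₁ ++ p₂ ∧ G.Path u x p₁ ∧ G.Path x w p₂ := by
  induction h with
  | nil v =>
    simp only [verts, List.map_nil, List.mem_singleton] at hx
    subst x
    exact ⟨[], [], rfl, .nil _, .nil _⟩
  | cons e h ih =>
    rw [verts_cons, List.mem_cons] at hx
    rcases hx with rfl | hx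
    · exact ⟨[], _, rfl, .nil _, .cons e h⟩
    · obtain ⟨p₁, p₂, rfl, h1, h2⟩ := ih hx
      exact ⟨e :: p₁, p₂, rfl, .cons e h1, h2⟩

lemma toSimple {u w : G.V} {p : List G.E} (h : G.Path u w p) :
    ∃ q, G.SimplePath u w q ∧ ∀ x ∈ q, x ∈ p := by
  induction h with
  | nil v => exact ⟨[], ⟨.nil v, by simp [verts]⟩, by simp⟩
  | @cons e w p h ih =>
    obtain ⟨q, ⟨hq, hnd⟩, hsub⟩ := ih
    by_cases hmem : G.ι e ∈ G.verts (G.τ e) q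
    · obtain ⟨q₁, q₂, rfl, h1, h2⟩ := mem_verts_split hq hmem
      refine ⟨q₂, ⟨h2, ?_⟩, fun x hx => List.mem_cons_of_mem _ (hsub x (List.mem_append_right _ hx))⟩
      obtain ⟨l, hl⟩ := verts_concat h1
      have : G.verts (G.τ e) (q₁ ++ q₂) = l ++ G.verts (G.ι e) q₂ := by
        rw [verts_append, hl, verts]; simp
      rw [this] at hnd
      exact hnd.of_append_right
    · refine ⟨e :: q, ⟨.cons e hq, ?_⟩, ?_⟩
      · rw [verts_cons]; exact List.nodup_cons.mpr ⟨hmem, hnd⟩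
      · intro x hx
        rcases List.mem_cons.mp hx with rfl | hx
        · exact List.mem_cons_self
        · exact List.mem_cons_of_mem _ (hsub x hx)

lemma exists_first {α : Type*} (P : α → Prop) :
    ∀ (l : List α), ¬ (∀ x ∈ l, P x) →
      ∃ a x b, l = a ++ x :: b ∧ ¬ P x ∧ ∀ y ∈ a, P y := by
  intro l
  induction l with
  | nil => intro h; exact absurd (by simp) h
  | cons z l ih =>
    intro h
    by_cases hz : P z
    · have : ¬ ∀ x ∈ l, P x := fun hall => h (by
        intro x hx
        rcases List.mem_cons.mp hx with rfl | hx
        · exact hz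
        · exact hall x hx)
      obtain ⟨a, x, b, rfl, hx, ha⟩ := ih this
      exact ⟨z :: a, x, b, rfl, hx, by
        intro y hy
        rcases List.mem_cons.mp hy with rfl | hy
        · exact hz
        · exact ha y hy⟩
    · exact ⟨[], z, l, rfl, hz, by simp⟩

lemma tree_unique {v : G.V} {ES : Set G.E} (hT : G.IsSpanningTree v ES) (w : G.V) :
    ∃! p, G.PathIn ES v w p := hT.2.2 w (Set.mem_univ w)

lemma tree_nodup {v w : G.V} {ES : Set G.E} (hT : G.IsSpanningTree v ES)
    {p : List G.E} (hp : G.PathIn ES v w p) : (G.verts v p).Nodup := by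
  by_contra hnd
  obtain ⟨q, ⟨hq, hqs⟩, hsub⟩ := toSimple hp.1
  have hqin : G.PathIn ES v w q := ⟨hq, fun e he => hp.2 e (hsub e he)⟩
  have := (tree_unique hT w).unique hqin hp
  rw [this] at hqs
  exact hnd hqs

/-- The edge-swap lemma: if `e₀` is an edge outside the spanning tree `ES` whose
terminal vertex does not lie on the tree geodesic to its initial vertex, then
swapping `e₀` in for the tree edge into `τ e₀` yields a different spanning tree. -/
lemma swap {v : G.V} {ES : Set G.E} (hT : G.IsSpanningTree v ES) (e₀ : G.E)
    (he₀ : e₀ ∉ ES)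
    (hbad : ∀ p, G.PathIn ES v (G.ι e₀) p → G.τ e₀ ∉ G.verts v p) :
    ∃ ES₂, G.IsSpanningTree v ES₂ ∧ ES₂ ≠ ES := by
  classical
  obtain ⟨t, ht, htu⟩ := tree_unique hT (G.τ e₀)
  obtain ⟨Pι, hPι, hPιu⟩ := tree_unique hT (G.ι e₀)
  have htne : t ≠ [] := by
    intro h
    subst h
    have : v = G.τ e₀ := path_nil_iff.mp ht.1
    exact hbad Pι hPι (this ▸ start_mem_verts)
  obtain ⟨t', f₀, htc⟩ := (List.eq_nil_or_concat t).resolve_left htne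
  rw [List.concat_eq_append] at htc
  subst htc
  obtain ⟨ht', hτf₀⟩ := path_concat_iff.mp ht.1
  have hf₀ES : f₀ ∈ ES := ht.2 f₀ (by simp)
  have hf₀ne : f₀ ≠ e₀ := fun h => he₀ (h ▸ hf₀ES)
  set ES₂ : Set G.E := insert e₀ (ES \ {f₀}) with hES₂
  have hf₀not : f₀ ∉ ES₂ := by simp [hES₂, hf₀ne]
  have he₀in : e₀ ∈ ES₂ := Set.mem_insert _ _
  have hsubES : ∀ {q : List G.E}, (∀ g ∈ q, g ∈ ES₂) → e₀ ∉ q → ∀ g ∈ q, g ∈ ES := by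
    intro q hq hne g hg
    rcases hq g hg with h | h
    · exact absurd (h ▸ hg) hne
    · exact h.1
  -- the end of `t` lies in verts of `t ++ r`
  have hτmem : ∀ r : List G.E, G.τ e₀ ∈ G.verts v (t' ++ [f₀] ++ r) := by
    intro r
    rw [verts_append]
    exact List.mem_append_left _ (end_mem_verts ht.1)
  -- Key decomposition: any `PathIn ES₂` path containing `e₀` factors as
  -- `Pι ++ e₀ :: q₂` with `t ++ q₂` a tree path.
  have K1 : ∀ (w : G.V) (q : List G.E), G.PathIn ES₂ v w q → e₀ ∈ q →
      ∃ q₂, q = Pι ++ e₀ :: q₂ ∧ G.PathIn ES v w ((t' ++ [f₀]) ++ q₂) := by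
    intro w q hq hmem
    have : ¬ ∀ x ∈ q, x ≠ e₀ := fun h => h e₀ hmem rfl
    obtain ⟨q₁, x, q₂, rfl, hx, hq₁⟩ := exists_first _ q this
    push_neg at hx
    subst x
    obtain ⟨m, hm1, hm2⟩ := path_append_iff.mp hq.1
    obtain ⟨rfl, hm3⟩ := path_cons_iff.mp hm2
    have hq₁in : G.PathIn ES v (G.ι e₀) q₁ :=
      ⟨hm1, hsubES (fun g hg => hq.2 g (List.mem_append_left _ hg))
        (fun h => hq₁ e₀ h rfl)⟩
    have hq₁eq : q₁ = Pι := hPιu q₁ hq₁in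
    have he₀q₂ : e₀ ∉ q₂ := by
      intro hmem2
      have : ¬ ∀ x ∈ q₂, x ≠ e₀ := fun h => h e₀ hmem2 rfl
      obtain ⟨r, x, s, hq₂eq, hx, hr⟩ := exists_first _ q₂ this
      push_neg at hx
      subst x
      rw [hq₂eq] at hm3
      obtain ⟨m', hr1, hr2⟩ := path_append_iff.mp hm3
      obtain ⟨rfl, _⟩ := path_cons_iff.mp hr2
      have hrin : ∀ g ∈ r, g ∈ ES := by
        refine hsubES ?_ (fun h => hr e₀ h rfl)
        intro g hg
        exact hq.2 g (by
          rw [hq₂eq]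
          exact List.mem_append_right _ (List.mem_cons_of_mem _ (List.mem_append_left _ hg)))
      have htr : G.PathIn ES v (G.ι e₀) ((t' ++ [f₀]) ++ r) :=
        ⟨path_append_iff.mpr ⟨G.τ e₀, ht.1, hr1⟩,
          by
            intro g hg
            rcases List.mem_append.mp hg with hg | hg
            · exact ht.2 g hg
            · exact hrin g hg⟩
      exact hbad _ htr (hτmem r)
    have hq₂in : ∀ g ∈ q₂, g ∈ ES :=
      hsubES (fun g hg => hq.2 g (List.mem_append_right _ (List.mem_cons_of_mem _ hg))) he₀q₂
    refine ⟨q₂, by rw [hq₁eq], ⟨path_append_iff.mpr ⟨G.τ e₀, ht.1, hm3⟩, ?_⟩⟩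
    intro g hg
    rcases List.mem_append.mp hg with hg | hg
    · exact ht.2 g hg
    · exact hq₂in g hg
  refine ⟨ES₂, ⟨Set.mem_univ v, fun e _ => ⟨Set.mem_univ _, Set.mem_univ _⟩, ?_⟩,
    fun h => he₀ (h ▸ he₀in)⟩
  intro w _
  obtain ⟨Pw, hPw, hPwu⟩ := tree_unique hT w
  by_cases hB : G.τ e₀ ∈ G.verts v Pw
  · -- `w` lies below `τ e₀` in the tree
    obtain ⟨a, b, rfl, ha, hb⟩ := mem_verts_split hPw.1 hB
    have haeq : a = t' ++ [f₀] :=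
      htu a ⟨ha, fun g hg => hPw.2 g (List.mem_append_left _ hg)⟩
    subst haeq
    have hnd := tree_nodup hT hPw
    have hdisj : ∀ x ∈ G.verts v (t' ++ [f₀]), x ∉ b.map G.τ := by
      rw [verts_append] at hnd
      exact fun x hx => (List.disjoint_of_nodup_append hnd) hx
    have hf₀b : f₀ ∉ b := by
      intro h
      exact hdisj (G.τ e₀) (end_mem_verts ht.1) (hτf₀ ▸ List.mem_map_of_mem (f := G.τ) h)
    have hf₀Pι : f₀ ∉ Pι := by
      intro h
      exact hbad Pι hPι (hτf₀ ▸ (by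
        exact List.mem_cons_of_mem _ (List.mem_map_of_mem (f := G.τ) h) : G.τ f₀ ∈ G.verts v Pι))
    have hbES₂ : ∀ g ∈ b, g ∈ ES₂ := by
      intro g hg
      exact Set.mem_insert_iff.mpr (Or.inr ⟨hPw.2 g (List.mem_append_right _ hg),
        fun h => hf₀b (h ▸ hg)⟩)
    refine ⟨Pι ++ e₀ :: b, ⟨path_append_iff.mpr ⟨G.ι e₀, hPι.1, .cons e₀ hb⟩, ?_⟩, ?_⟩
    · intro g hg
      rcases List.mem_append.mp hg with hg | hg
      · exact Set.mem_insert_iff.mpr (Or.inr ⟨hPι.2 g hg, fun h => hf₀Pι (h ▸ hg)⟩)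
      · rcases List.mem_cons.mp hg with rfl | hg
        · exact he₀in
        · exact hbES₂ g hg
    · intro q hq
      by_cases hmem : e₀ ∈ q
      · obtain ⟨q₂, rfl, hq₂⟩ := K1 w q hq hmem
        have : (t' ++ [f₀]) ++ q₂ = (t' ++ [f₀]) ++ b := hPwu _ hq₂
        rw [List.append_cancel_left this]
      · have : G.PathIn ES v w q := ⟨hq.1, hsubES hq.2 hmem⟩
        have hqPw := hPwu q this
        exfalso
        exact hf₀not (hq.2 f₀ (hqPw ▸ (List.mem_append_left _ (by simp))))
  · -- `w` is not below `τ e₀`; the old tree path works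
    have hPwES₂ : ∀ g ∈ Pw, g ∈ ES₂ := by
      intro g hg
      refine Set.mem_insert_iff.mpr (Or.inr ⟨hPw.2 g hg, fun h => hB ?_⟩)
      subst h
      exact hτf₀ ▸ List.mem_cons_of_mem _ (List.mem_map_of_mem (f := G.τ) hg)
    refine ⟨Pw, ⟨hPw.1, hPwES₂⟩, ?_⟩
    intro q hq
    by_cases hmem : e₀ ∈ q
    · obtain ⟨q₂, rfl, hq₂⟩ := K1 w _ hq hmem
      exfalso
      exact hB (hPwu _ hq₂ ▸ hτmem q₂)
    · exact hPwu q ⟨hq.1, hsubES hq.2 hmem⟩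

/-- If every simple path from the root lies in a spanning tree, then simple
paths are unique. -/
lemma uspp_of_tree {v : G.V} {ES : Set G.E} (hroot : G.Rooted v)
    (hT : G.IsSpanningTree v ES)
    (C : ∀ (w : G.V) (p : List G.E), G.SimplePath v w p → G.PathIn ES v w p) :
    ∀ w : G.V, ∃! p : List G.E, G.SimplePath v w p := by
  intro w
  obtain ⟨p₀, hp₀⟩ := hroot w
  obtain ⟨q, hq, -⟩ := toSimple hp₀
  exact ⟨q, hq, fun r hr => (tree_unique hT w).unique (C w r hr) (C w q hq)⟩

/-- Direction (2) → (1). -/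
lemma one_of_two {v : G.V} (hroot : G.Rooted v)
    (h2 : ∃! ES : Set G.E, G.IsSpanningTree v ES) :
    ∀ w : G.V, ∃! p : List G.E, G.SimplePath v w p := by
  obtain ⟨ES, hT, hTu⟩ := h2
  refine uspp_of_tree hroot hT ?_
  intro w p hp
  by_contra hC
  have hne : ¬ ∀ e ∈ p, e ∈ ES := fun h => hC ⟨hp.1, h⟩
  obtain ⟨a, e, b, rfl, he, ha⟩ := exists_first _ p hne
  obtain ⟨m, hma, hmb⟩ := path_append_iff.mp hp.1
  obtain ⟨rfl, -⟩ := path_cons_iff.mp hmb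
  have hain : G.PathIn ES v (G.ι e) a := ⟨hma, ha⟩
  have hτnot : G.τ e ∉ G.verts v a := by
    have hnd := hp.2
    rw [verts_append] at hnd
    intro hmem
    exact (List.disjoint_of_nodup_append hnd) hmem (by simp)
  obtain ⟨ES₂, hT₂, hne₂⟩ := swap hT e he (by
    intro r hr
    rwa [(tree_unique hT (G.ι e)).unique hr hain])
  exact hne₂ (hTu ES₂ hT₂)

/-- Direction (3) → (1). -/
lemma one_of_three {v : G.V} (hroot : G.Rooted v)
    (h3 : ∃ ES : Set G.E, G.IsSpanningTree v ES ∧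
      ∀ e : G.E, e ∉ ES → ∀ p q : List G.E,
        G.PathIn ES v (G.ι e) p → G.PathIn ES v (G.τ e) q → q <+: p) :
    ∀ w : G.V, ∃! p : List G.E, G.SimplePath v w p := by
  obtain ⟨ES, hT, hpref⟩ := h3
  refine uspp_of_tree hroot hT ?_
  intro w p
  induction p using List.reverseRecOn generalizing w with
  | nil => exact fun hp => ⟨hp.1, by simp⟩
  | append_singleton p e ih =>
    intro hp
    obtain ⟨h1, rfl⟩ := path_concat_iff.mp hp.1
    have hnd := hp.2
    rw [verts_append] at hnd
    have hps : G.SimplePath v (G.ι e) p := ⟨h1, hnd.of_append_left⟩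
    have hpin := ih (G.ι e) hps
    have heES : e ∈ ES := by
      by_contra heES
      obtain ⟨q, hq, -⟩ := tree_unique hT (G.τ e)
      have hqp : q <+: p := hpref e heES p q hpin hq
      have hτmem : G.τ e ∈ G.verts v p := by
        rcases List.eq_nil_or_concat q with rfl | ⟨q', g, rfl⟩
        · have : v = G.τ e := path_nil_iff.mp hq.1
          exact this ▸ start_mem_verts
        · rw [List.concat_eq_append] at hq hqp
          obtain ⟨-, hτg⟩ := path_concat_iff.mp hq.1
          have : g ∈ p := hqp.subset (by simp)
          exact hτg ▸ List.mem_cons_of_mem _ (List.mem_map_of_mem (f := G.τ) this)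
      exact (List.disjoint_of_nodup_append hnd) hτmem (by simp)
    refine ⟨hp.1, ?_⟩
    intro g hg
    rcases List.mem_append.mp hg with hg | hg
    · exact hpin.2 g hg
    · rw [List.mem_singleton.mp hg]; exact heES

/-- Direction (1) → (2) and (3): the unique simple paths assemble into the
unique spanning tree, which moreover has the geodesic-prefix property. -/
lemma tree_of_uspp {v : G.V}
    (h1 : ∀ w : G.V, ∃! p : List G.E, G.SimplePath v w p) :
    ∃ ES : Set G.E, G.IsSpanningTree v ES ∧
      (∀ ES' : Set G.E, G.IsSpanningTree v ES' → ES' = ES) ∧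
      (∀ e : G.E, e ∉ ES → ∀ p q : List G.E,
        G.PathIn ES v (G.ι e) p → G.PathIn ES v (G.τ e) q → q <+: p) := by
  classical
  have hPex : ∀ w : G.V, ∃ p, G.SimplePath v w p ∧
      ∀ q, G.SimplePath v w q → q = p := fun w => h1 w
  choose P hP hPu using hPex
  set ES : Set G.E := {e | P (G.τ e) = P (G.ι e) ++ [e]} with hESdef
  -- prefixes of simple paths are the canonical simple paths
  have A1 : ∀ (w m : G.V) (p₁ p₂ : List G.E), G.SimplePath v w (p₁ ++ p₂) →
      G.Path v m p₁ → p₁ = P m := by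
    intro w m p₁ p₂ hp h₁
    refine hPu m p₁ ⟨h₁, ?_⟩
    have := hp.2
    rw [verts_append] at this
    exact this.of_append_left
  -- the canonical paths are tree paths
  have A2 : ∀ w : G.V, G.PathIn ES v w (P w) := by
    intro w
    refine ⟨(hP w).1, ?_⟩
    intro e he
    obtain ⟨a, b, hab⟩ := List.append_of_mem he
    have hpw := (hP w).1
    rw [hab] at hpw
    obtain ⟨m, hma, hmb⟩ := path_append_iff.mp hpw
    obtain ⟨rfl, hb⟩ := path_cons_iff.mp hmb
    have ha' : a = P (G.ι e) := A1 w _ a (e :: b) (hab ▸ hP w) hma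
    have hae : a ++ [e] = P (G.τ e) := by
      refine A1 w _ (a ++ [e]) b ?_ (path_concat_iff.mpr ⟨hma, rfl⟩)
      rw [List.append_assoc, List.singleton_append, ← hab]
      exact hP w
    show P (G.τ e) = P (G.ι e) ++ [e]
    rw [← hae, ha']
  -- any tree path is the canonical path
  have A3 : ∀ (w : G.V) (q : List G.E), G.PathIn ES v w q → q = P w := by
    intro w q
    induction q using List.reverseRecOn generalizing w with
    | nil =>
      intro hq
      have : v = w := path_nil_iff.mp hq.1
      subst this
      exact hPu v [] ⟨.nil v, by simp [verts]⟩
    | append_singleton q e ih =>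
      intro hq
      obtain ⟨h1, rfl⟩ := path_concat_iff.mp hq.1
      have hqeq : q = P (G.ι e) :=
        ih (G.ι e) ⟨h1, fun g hg => hq.2 g (List.mem_append_left _ hg)⟩
      have heES : P (G.τ e) = P (G.ι e) ++ [e] := hq.2 e (by simp)
      rw [heES, hqeq]
  have hT : G.IsSpanningTree v ES :=
    ⟨Set.mem_univ v, fun e _ => ⟨Set.mem_univ _, Set.mem_univ _⟩,
      fun w _ => ⟨P w, A2 w, fun q hq => A3 w q hq⟩⟩
  refine ⟨ES, hT, ?_, ?_⟩
  · -- uniqueness of the spanning tree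
    intro ES' hT'
    have key : ∀ (w : G.V) (p : List G.E), G.PathIn ES' v w p → p = P w :=
      fun w p hp => hPu w p ⟨hp.1, tree_nodup hT' hp⟩
    ext e
    constructor
    · intro he
      obtain ⟨p, hp, -⟩ := tree_unique hT' (G.ι e)
      have hpe : G.PathIn ES' v (G.τ e) (p ++ [e]) :=
        ⟨path_concat_iff.mpr ⟨hp.1, rfl⟩, by
          intro g hg
          rcases List.mem_append.mp hg with hg | hg
          · exact hp.2 g hg
          · rw [List.mem_singleton.mp hg]; exact he⟩
      show P (G.τ e) = P (G.ι e) ++ [e]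
      rw [← key _ _ hpe, ← key _ _ hp]
    · intro he
      obtain ⟨p, hp, -⟩ := tree_unique hT' (G.τ e)
      have hpeq : p = P (G.τ e) := key _ _ hp
      have : e ∈ p := by
        rw [hpeq, he]
        simp
      exact hp.2 e this
  · -- the geodesic-prefix property
    intro e he p q hp hq
    rw [A3 _ _ hp, A3 _ _ hq]
    have hτmem : G.τ e ∈ G.verts v (P (G.ι e)) := by
      by_contra hmem
      refine he ?_
      have hsp : G.SimplePath v (G.τ e) (P (G.ι e) ++ [e]) := by
        refine ⟨path_concat_iff.mpr ⟨(hP _).1, rfl⟩, ?_⟩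
        rw [verts_append]
        simp only [List.map_singleton]
        exact List.nodup_append'.mpr ⟨(hP _).2, List.nodup_singleton _,
          by simpa [List.disjoint_singleton] using hmem⟩
      show P (G.τ e) = P (G.ι e) ++ [e]
      exact (hPu _ _ hsp).symm
    obtain ⟨p₁, p₂, hsplit, h1, h2⟩ := mem_verts_split (hP (G.ι e)).1 hτmem
    have : p₁ = P (G.τ e) := A1 (G.ι e) _ p₁ p₂ (hsplit ▸ hP (G.ι e)) h1
    exact ⟨p₂, by rw [← this, ← hsplit]⟩

end Aux

/-- For a rooted directed graph `(Γ, v)` the following are equivalent: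
(1) each vertex is reached from `v` by a unique simple directed path;
(2) `(Γ, v)` admits a unique directed spanning tree;
(3) `(Γ, v)` admits a directed spanning tree `T` such that for each edge `e`
outside `T`, the tree geodesic from `v` to `τ(e)` is an initial segment of the
tree geodesic from `v` to `ι(e)`. -/
theorem uspp_tfae (G : DGraph) (v : G.V) (hroot : G.Rooted v) :
    ((∀ w : G.V, ∃! p : List G.E, G.SimplePath v w p) ↔
        (∃! ES : Set G.E, G.IsSpanningTree v ES)) ∧
      ((∀ w : G.V, ∃! p : List G.E, G.SimplePath v w p) ↔
        (∃ ES : Set G.E, G.IsSpanningTree v ES ∧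
          ∀ e : G.E, e ∉ ES → ∀ p q : List G.E,
            G.PathIn ES v (G.ι e) p → G.PathIn ES v (G.τ e) q → q <+: p)) := by
  constructor
  · constructor
    · intro h1
      obtain ⟨ES, hT, hu, -⟩ := tree_of_uspp h1
      exact ⟨ES, hT, hu⟩
    · exact one_of_two hroot
  · constructor
    · intro h1
      obtain ⟨ES, hT, -, hpref⟩ := tree_of_uspp h1
      exact ⟨ES, hT, hpref⟩
    · exact one_of_three hroot

end DGraph
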